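/- Let c ≥ 1 be an integer and let z > 0 be a rational number. Then for a rational number y, one has y = c + 1/z if and only if y/(y−1) = [2, 2, …, 2, 1+z]^-, where the coefficient sequence consists of c − 1 copies of 2 followed by 1 + z. (In particular, for such y one has y > 1, so y/(y−1) is defined.) -/
import Mathlib


/-- Negative continued fraction `[c₁, …, cₙ]⁻ = c₁ - 1/[c₂, …, cₙ]⁻` of a
finite sequence of rationals (junk value `0` on the empty list). -/
def negCF : List ℚ → ℚ
  | [] => 0
  | [c] => c
  | c :: d :: t => c - 1 / negCF (d :: t)

lemma negCF_cons (a : ℚ) (l : List ℚ) (hl : l ≠ []) :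
    negCF (a :: l) = a - 1 / negCF l := by
  cases l with
  | nil => exact absurd rfl hl
  | cons d t => rfl

lemma negCF_rep (z : ℚ) (hz : 0 < z) : ∀ n : ℕ,
    negCF (List.replicate n (2:ℚ) ++ [1+z]) = (1+(n+1)*z)/(1+n*z) := by
  intro n
  induction n with
  | zero => simp [negCF]
  | succ k ih =>
    have hk : (0:ℚ) < 1 + (k:ℚ)*z := by positivity
    have hk1 : (0:ℚ) < 1 + ((k:ℚ)+1)*z := by positivity
    rw [List.replicate_succ, List.cons_append,
      negCF_cons _ _ (by simp), ih]
    push_cast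
    field_simp
    ring

/-- For an integer `c ≥ 1` and a rational `z > 0`, a rational `y` satisfies
`y = c + 1/z` if and only if `y/(y-1) = [2, …, 2, 1+z]⁻`, where there are
`c - 1` copies of `2`. In particular for such `y` one has `y > 1`. -/
theorem stmt7 (c : ℤ) (hc : 1 ≤ c) (z : ℚ) (hz : 0 < z) (y : ℚ) :
    (y = (c : ℚ) + 1 / z → 1 < y) ∧
    (y = (c : ℚ) + 1 / z ↔
      y / (y - 1) = negCF (List.replicate (c - 1).toNat (2 : ℚ) ++ [1 + z])) := by
  have hc1 : (1:ℚ) ≤ (c:ℚ) := by exact_mod_cast hc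
  have hzi : (0:ℚ) < 1 / z := by positivity
  have hy1 : y = (c : ℚ) + 1 / z → 1 < y := by
    intro h; rw [h]; linarith
  refine ⟨hy1, ?_⟩
  have hn : ((c - 1).toNat : ℚ) = (c : ℚ) - 1 := by
    have h0 : ((c - 1).toNat : ℤ) = c - 1 := Int.toNat_of_nonneg (by omega)
    exact_mod_cast congrArg (fun x : ℤ => (x : ℚ)) h0
  rw [negCF_rep z hz, hn]
  have hden : (0:ℚ) < 1 + ((c:ℚ) - 1) * z := by nlinarith
  have hnum : (0:ℚ) < 1 + ((c:ℚ) - 1 + 1) * z := by nlinarith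
  constructor
  · intro h
    have hy : 1 < y := hy1 h
    have hym : (c:ℚ) + 1 / z - 1 ≠ 0 := by
      have : (0:ℚ) < (c:ℚ) + 1 / z - 1 := by linarith
      exact this.ne'
    rw [h, div_eq_div_iff hym hden.ne']
    field_simp
    ring
  · intro h
    have hy1' : y ≠ 1 := by
      intro hy
      rw [hy] at h
      norm_num at h
      have h' := h.symm
      rw [div_eq_iff hden.ne'] at h'
      nlinarith [h']
    have hym : y - 1 ≠ 0 := sub_ne_zero.mpr hy1'
    have h2 : y * (1 + ((c:ℚ) - 1) * z) = (1 + ((c:ℚ) - 1 + 1) * z) * (y - 1) := by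
      field_simp at h
      linarith [h]
    have hz' : z ≠ 0 := ne_of_gt hz
    field_simp
    nlinarith [h2]
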